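/- For every integer n ≥ 0, the Fourier coefficient of 1/cos(x/4) satisfies a_n = (8√2/π) ∑_{k=n+1}^{∞} (-1)^k (1/(4k-1) - 1/(4k-3)), where the tail series converges. -/

import Mathlib

open Real Filter MeasureTheory

/-- The Fourier cosine coefficients of F(x) = 1/cos(x/4) on [-π, π]. -/
noncomputable def fourierA (n : ℕ) : ℝ :=
  (8 / π) * ∫ t in (0:ℝ)..(π / 4), Real.cos (4 * n * t) / Real.cos t

/-- The tail term of the series, for k = j + n + 1 ≥ n + 1. -/
noncomputable def tailTerm (n j : ℕ) : ℝ :=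
  (-1 : ℝ) ^ (j + n + 1)
    * (1 / (4 * ((j : ℝ) + n + 1) - 1) - 1 / (4 * ((j : ℝ) + n + 1) - 3))

noncomputable def tSeq (k : ℕ) : ℝ :=
  (-1 : ℝ) ^ k * (1 / (4 * (k : ℝ) - 1) - 1 / (4 * (k : ℝ) - 3))

lemma tailTerm_eq (n j : ℕ) : tailTerm n j = tSeq (j + (n + 1)) := by
  unfold tailTerm tSeq
  push_cast
  ring_nf

lemma abs_tSeq_le (k : ℕ) : |tSeq (k + 1)| ≤ 2 / ((k : ℝ) + 1) ^ 2 := by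
  have hx : (0:ℝ) ≤ k := Nat.cast_nonneg k
  have h1 : (0:ℝ) < 4 * k + 1 := by linarith
  have h3 : (0:ℝ) < 4 * k + 3 := by linarith
  have key : tSeq (k+1) = (-1:ℝ)^(k+1) * (-(2 / ((4*(k:ℝ)+1) * (4*(k:ℝ)+3)))) := by
    unfold tSeq
    push_cast
    rw [show (4:ℝ) * ((k:ℝ)+1) - 1 = 4*(k:ℝ)+3 by ring, show (4:ℝ) * ((k:ℝ)+1) - 3 = 4*(k:ℝ)+1 by ring]
    congr 1
    field_simp
    ring
  rw [key, abs_mul, abs_pow, abs_neg, abs_one, one_pow, one_mul, abs_neg,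
      abs_of_nonneg (by positivity)]
  gcongr
  nlinarith

lemma summable_tSeq : Summable tSeq := by
  rw [← summable_nat_add_iff 1]
  have h2 : Summable (fun k : ℕ => 2 * (1 / ((k : ℝ) + 1) ^ 2)) := by
    have h := (summable_nat_add_iff (f := fun n : ℕ => 1 / (n:ℝ) ^ 2) 1).mpr
      ((Real.summable_one_div_nat_pow (p := 2)).mpr one_lt_two)
    have h' : Summable (fun k : ℕ => 1 / ((k:ℝ) + 1) ^ 2) := by
      refine h.congr fun k => ?_
      push_cast
      ring_nf
    exact h'.mul_left 2
  refine Summable.of_abs (Summable.of_nonneg_of_le (fun k => abs_nonneg _) ?_ h2)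
  intro k
  have := abs_tSeq_le k
  linarith [abs_tSeq_le k, (by ring_nf : 2 * (1 / ((k:ℝ) + 1) ^ 2) = 2 / ((k:ℝ)+1)^2)]

lemma summable_tail (n : ℕ) : Summable (tailTerm n) := by
  have h : Summable (fun j : ℕ => tSeq (j + (n+1))) :=
    (summable_nat_add_iff (n+1)).mpr summable_tSeq
  exact h.congr fun j => (tailTerm_eq n j).symm

noncomputable def Iint (n : ℕ) : ℝ :=
  ∫ t in (0:ℝ)..(π / 4), Real.cos (4 * n * t) / Real.cos t

lemma cos_pos_on {t : ℝ} (h : t ∈ Set.uIcc (0:ℝ) (π/4)) : 0 < Real.cos t := by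
  rw [Set.uIcc_of_le (by positivity)] at h
  apply Real.cos_pos_of_mem_Ioo
  constructor
  · linarith [h.1, Real.pi_pos]
  · linarith [h.2, Real.pi_pos]

lemma integrable_quot (c : ℝ) :
    IntervalIntegrable (fun t => Real.cos (c * t) / Real.cos t) volume 0 (π/4) := by
  apply ContinuousOn.intervalIntegrable
  apply ContinuousOn.div (Continuous.continuousOn (by continuity)) Real.continuousOn_cos
  intro t ht
  exact (cos_pos_on ht).ne'

lemma mycos_integral (c : ℝ) (hc : c ≠ 0) :
    ∫ t in (0:ℝ)..(π/4), Real.cos (c * t) = Real.sin (c * (π/4)) / c := by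
  rw [intervalIntegral.integral_comp_mul_left (fun x => Real.cos x) hc]
  simp [integral_cos, smul_eq_mul]
  ring

lemma sin_shift (n : ℕ) (r : ℝ) :
    Real.sin ((n:ℝ) * π + r) = (-1:ℝ)^n * Real.sin r := by
  rw [add_comm, Real.sin_add_nat_mul_pi]

lemma Iint_succ_sub (n : ℕ) : Iint (n+1) - Iint n = -Real.sqrt 2 * tSeq (n+1) := by
  have h31 : (0:ℝ) < 4 * n + 3 := by positivity
  have h11 : (0:ℝ) < 4 * n + 1 := by positivity
  have key : ∀ A x : ℝ, Real.cos (A + 2*x) - Real.cos (A - 2*x)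
      = 2 * Real.cos x * (Real.cos (A + x) - Real.cos (A - x)) := by
    intro A x
    simp only [Real.cos_add, Real.cos_sub, Real.sin_two_mul, Real.cos_two_mul]
    ring
  have hpt : ∀ t ∈ Set.uIcc (0:ℝ) (π/4),
      Real.cos (4 * ((n:ℝ)+1) * t) / Real.cos t - Real.cos (4 * (n:ℝ) * t) / Real.cos t
        = 2 * Real.cos ((4*(n:ℝ)+3) * t) - 2 * Real.cos ((4*(n:ℝ)+1) * t) := by
    intro t ht
    have hc := (cos_pos_on ht).ne'
    have hk := key ((4*(n:ℝ)+2) * t) t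
    rw [show (4*(n:ℝ)+2)*t + 2*t = 4*((n:ℝ)+1)*t by ring,
        show (4*(n:ℝ)+2)*t - 2*t = 4*(n:ℝ)*t by ring,
        show (4*(n:ℝ)+2)*t + t = (4*(n:ℝ)+3)*t by ring,
        show (4*(n:ℝ)+2)*t - t = (4*(n:ℝ)+1)*t by ring] at hk
    field_simp
    ring_nf; ring_nf at hk; linarith [hk]
  have hInt1 : IntervalIntegrable (fun t => Real.cos ((4*(n:ℝ)+3) * t)) volume 0 (π/4) :=
    (Real.continuous_cos.comp (continuous_const.mul continuous_id)).intervalIntegrable _ _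
  have hInt2 : IntervalIntegrable (fun t => Real.cos ((4*(n:ℝ)+1) * t)) volume 0 (π/4) :=
    (Real.continuous_cos.comp (continuous_const.mul continuous_id)).intervalIntegrable _ _
  have step1 : Iint (n+1) - Iint n
      = ∫ t in (0:ℝ)..(π/4), (Real.cos (4 * ((n:ℝ)+1) * t) / Real.cos t
          - Real.cos (4 * (n:ℝ) * t) / Real.cos t) := by
    rw [intervalIntegral.integral_sub (integrable_quot _) (integrable_quot _)]
    unfold Iint
    push_cast
    ring_nf
  rw [step1, intervalIntegral.integral_congr hpt,
      intervalIntegral.integral_sub (hInt1.const_mul 2) (hInt2.const_mul 2),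
      intervalIntegral.integral_const_mul, intervalIntegral.integral_const_mul,
      mycos_integral _ h31.ne', mycos_integral _ h11.ne',
      show (4*(n:ℝ)+3) * (π/4) = (n:ℝ)*π + (π - π/4) by ring,
      show (4*(n:ℝ)+1) * (π/4) = (n:ℝ)*π + π/4 by ring,
      sin_shift, sin_shift, Real.sin_pi_sub, Real.sin_pi_div_four]
  unfold tSeq
  push_cast
  rw [show (4:ℝ)*((n:ℝ)+1) - 1 = 4*(n:ℝ)+3 by ring, show (4:ℝ)*((n:ℝ)+1) - 3 = 4*(n:ℝ)+1 by ring,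
      pow_succ]
  field_simp


lemma Iint_bound (n : ℕ) (hn : 1 ≤ n) : |Iint n| ≤ π / (8 * n) := by
  have hc : (0:ℝ) < 4 * n := by positivity
  set c : ℝ := 4 * n with hcdef
  have hu : ∀ x ∈ Set.uIcc (0:ℝ) (π/4),
      HasDerivAt (fun y => (Real.cos y)⁻¹) (Real.sin x / Real.cos x ^ 2) x := by
    intro x hx
    have h := (Real.hasDerivAt_cos x).inv (cos_pos_on hx).ne'
    exact h.congr_deriv (by ring)
  have hv : ∀ x ∈ Set.uIcc (0:ℝ) (π/4),
      HasDerivAt (fun y => Real.sin (c * y) / c) (Real.cos (c * x)) x := by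
    intro x _
    have h1 : HasDerivAt (fun y : ℝ => c * y) c x := by
      simpa using (hasDerivAt_id x).const_mul c
    have h := ((Real.hasDerivAt_sin (c * x)).comp x h1).div_const c
    exact h.congr_deriv (mul_div_cancel_right₀ _ hc.ne')
  have hu' : IntervalIntegrable (fun x => Real.sin x / Real.cos x ^ 2) volume 0 (π/4) := by
    apply ContinuousOn.intervalIntegrable
    apply ContinuousOn.div Real.continuous_sin.continuousOn
      (Real.continuous_cos.pow 2).continuousOn
    intro t ht
    exact pow_ne_zero 2 (cos_pos_on ht).ne'
  have hv' : IntervalIntegrable (fun x => Real.cos (c * x)) volume 0 (π/4) :=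
    (Real.continuous_cos.comp (continuous_const.mul continuous_id)).intervalIntegrable _ _
  have hI : Iint n = ∫ x in (0:ℝ)..(π/4), (Real.cos x)⁻¹ * Real.cos (c * x) := by
    unfold Iint
    refine intervalIntegral.integral_congr fun t _ => ?_
    rw [div_eq_inv_mul]
  have ibp := intervalIntegral.integral_mul_deriv_eq_deriv_mul hu hv hu' hv'
  have hb1 : Real.sin (c * (π/4)) = 0 := by
    rw [show c * (π/4) = (n:ℝ) * π by rw [hcdef]; ring, Real.sin_nat_mul_pi]
  have hb0 : Real.sin (c * 0) = 0 := by simp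
  rw [hI, ibp, hb1, hb0] 
  simp only [zero_div, mul_zero, sub_zero, zero_sub, abs_neg]
  have hbound : ∀ x ∈ Set.uIoc (0:ℝ) (π/4),
      ‖Real.sin x / Real.cos x ^ 2 * (Real.sin (c * x) / c)‖ ≤ 2 / c := by
    intro x hx
    rw [Set.uIoc_of_le (by positivity)] at hx
    have hcx : Real.cos (π/4) ≤ Real.cos x := by
      apply Real.cos_le_cos_of_nonneg_of_le_pi (le_of_lt hx.1) (by linarith [Real.pi_pos]) hx.2
    rw [Real.cos_pi_div_four] at hcx
    have hs2 : (0:ℝ) < Real.sqrt 2 / 2 := by positivity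
    have hcos2 : (1:ℝ)/2 ≤ Real.cos x ^ 2 := by
      have h0 : (Real.sqrt 2 / 2) ^ 2 ≤ Real.cos x ^ 2 := by
        apply pow_le_pow_left₀ (le_of_lt hs2) hcx
      have : (Real.sqrt 2 / 2) ^ 2 = 1/2 := by
        rw [div_pow, Real.sq_sqrt (by norm_num : (2:ℝ) ≥ 0)]
        norm_num
      linarith
    have hcpos : (0:ℝ) < Real.cos x := by
      have := Real.sqrt_pos.mpr (by norm_num : (0:ℝ) < 2)
      linarith
    have heq : ‖Real.sin x / Real.cos x ^ 2 * (Real.sin (c * x) / c)‖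
        = |Real.sin x| * |Real.sin (c * x)| / (Real.cos x ^ 2 * c) := by
      rw [Real.norm_eq_abs, abs_mul, abs_div, abs_div,
          abs_of_pos (by positivity : (0:ℝ) < Real.cos x ^ 2), abs_of_pos hc]
      ring
    rw [heq]
    calc |Real.sin x| * |Real.sin (c * x)| / (Real.cos x ^ 2 * c)
        ≤ 1 * 1 / (1/2 * c) := by
          gcongr
          · exact Real.abs_sin_le_one x
          · exact Real.abs_sin_le_one (c * x)
      _ = 2 / c := by field_simp
  have := intervalIntegral.norm_integral_le_of_norm_le_const hbound
  rw [Real.norm_eq_abs] at this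
  have hπ : |π/4 - 0| = π/4 := by
    rw [sub_zero, abs_of_pos (by positivity)]
  rw [hπ] at this
  calc |∫ x in (0:ℝ)..(π/4), Real.sin x / Real.cos x ^ 2 * (Real.sin (c*x)/c)|
      ≤ 2 / c * (π/4) := this
    _ = π / (8 * n) := by rw [hcdef]; field_simp; ring

lemma Iint_tendsto : Tendsto Iint atTop (nhds 0) := by
  rw [show (0:ℝ) = 0 from rfl]
  have habs : Tendsto (fun n => |Iint n|) atTop (nhds 0) := by
    apply squeeze_zero' (Eventually.of_forall fun n => abs_nonneg _)
      (eventually_atTop.mpr ⟨1, fun n hn => Iint_bound n hn⟩)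
    have : (fun n : ℕ => π / (8 * n)) = fun n : ℕ => (π/8) / n := by
      funext n; rw [div_div]
    rw [this]
    exact tendsto_const_div_atTop_nhds_zero_nat (π/8)
  simp only [← Real.norm_eq_abs] at habs
  exact tendsto_zero_iff_norm_tendsto_zero.mpr habs

/-- For every n ≥ 0, the tail series ∑_{k=n+1}^∞ (-1)^k (1/(4k-1) - 1/(4k-3)) converges
and aₙ = (8√2/π) ∑_{k=n+1}^∞ (-1)^k (1/(4k-1) - 1/(4k-3)). -/
theorem fourier_coeff_tail_series (n : ℕ) :
    Summable (tailTerm n) ∧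
      fourierA n = (8 * Real.sqrt 2 / π) * ∑' j : ℕ, tailTerm n j := by
  refine ⟨summable_tail n, ?_⟩
  set T : ℕ → ℝ := fun m => ∑' j : ℕ, tSeq (j + (m+1)) with hTdef
  have hT : ∀ m : ℕ, (∑' j : ℕ, tailTerm m j) = T m := fun m =>
    tsum_congr (tailTerm_eq m)
  have hTrec : ∀ m, T m = tSeq (m+1) + T (m+1) := by
    intro m
    have hsum : Summable (fun j : ℕ => tSeq (j + (m+1))) :=
      (summable_nat_add_iff (m+1)).mpr summable_tSeq
    have h := hsum.tsum_eq_zero_add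
    rw [hTdef]
    simp only []
    rw [h, zero_add]
    congr 1
    exact tsum_congr fun j => congrArg tSeq (by omega)
  have hD : ∀ m, Iint m - Real.sqrt 2 * T m = Iint 0 - Real.sqrt 2 * T 0 := by
    intro m
    induction m with
    | zero => rfl
    | succ k ih =>
      have h1 := Iint_succ_sub k
      have h2 : Real.sqrt 2 * T k = Real.sqrt 2 * tSeq (k+1) + Real.sqrt 2 * T (k+1) := by
        rw [hTrec k]; ring
      linarith
  have hTlim : Tendsto T atTop (nhds 0) := by
    have h := (tendsto_sum_nat_add tSeq).comp (tendsto_add_atTop_nat 1)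
    exact h
  have hlim : Tendsto (fun m => Iint m - Real.sqrt 2 * T m) atTop (nhds 0) := by
    have := Iint_tendsto.sub (hTlim.const_mul (Real.sqrt 2))
    simpa using this
  have hzero : Iint 0 - Real.sqrt 2 * T 0 = 0 := by
    have hconst : Tendsto (fun _ : ℕ => Iint 0 - Real.sqrt 2 * T 0) atTop (nhds 0) :=
      Tendsto.congr (fun m => hD m) hlim
    exact tendsto_nhds_unique tendsto_const_nhds hconst
  have hIn : Iint n = Real.sqrt 2 * T n := by
    have := hD n
    linarith
  have hFA : fourierA n = (8 / π) * Iint n := rfl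
  rw [hFA, hIn, hT n]
  ring
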